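/- Let I ⊆ k[x_1,…,x_n] be a monomial ideal and σ ⊆ [n] with |σ| < n. If u is a monomial with x_i u ∈ I for all i ∈ σ and u ∈ (x_j : j ∉ σ)·(I : (x_i : i ∈ σ)), then the monomial cycle ū e_σ is a boundary in the Koszul complex of S/I. Explicitly, if u = x_ℓ v with ℓ ∉ σ and v ∈ I : (x_i : i ∈ σ), then ū e_σ = ∂(± v̄ e_{σ∪{ℓ}}). -/

import Mathlib

open MvPolynomial

/-- The Koszul sign `sgn(τ, j) = (-1)^{#{s ∈ τ : s < j}}`. -/
def koszulSgn {n : ℕ} (τ : Finset (Fin n)) (j : Fin n) : ℤ :=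
  (-1) ^ ((τ.filter fun s => s < j).card)

/-- The Koszul differential on chains, represented as functions
`Finset (Fin n) → R` (the value at `σ` is the coefficient of `e_σ`):
`(∂w)(σ) = Σ_{j ∉ σ} sgn(σ ∪ {j}, j) · x_j · w(σ ∪ {j})`. -/
noncomputable def koszulBd {n : ℕ} {R : Type*} [CommRing R] (x : Fin n → R)
    (w : Finset (Fin n) → R) (σ : Finset (Fin n)) : R :=
  ∑ j ∈ σᶜ, koszulSgn (insert j σ) j • (x j * w (insert j σ))

/-- `I` is a monomial ideal: generated by a set of monomials. -/
def IsMonomialIdeal {k : Type*} [Field k] {n : ℕ}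
    (I : Ideal (MvPolynomial (Fin n) k)) : Prop :=
  ∃ G : Set (Fin n →₀ ℕ),
    I = Ideal.span ((fun d => (monomial d (1 : k) : MvPolynomial (Fin n) k)) '' G)

/-- if `x_i u ∈ I` for all `i ∈ σ` and `u = x_ℓ v` with `ℓ ∉ σ`
and `v ∈ I : (x_i : i ∈ σ)`, then the monomial cycle `ū e_σ` is a boundary;
explicitly `ū e_σ = ∂(sgn(σ∪{ℓ},ℓ) · v̄ e_{σ∪{ℓ}})`. -/
theorem stmt3 {k : Type*} [Field k] {n : ℕ}
    (I : Ideal (MvPolynomial (Fin n) k)) (hI : IsMonomialIdeal I)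
    (σ : Finset (Fin n)) (hσ : σ ≠ Finset.univ)
    (dv : Fin n →₀ ℕ) (v : MvPolynomial (Fin n) k) (hv : v = monomial dv (1 : k))
    (ℓ : Fin n) (hℓ : ℓ ∉ σ)
    (u : MvPolynomial (Fin n) k) (hu : u = X ℓ * v)
    (hcyc : ∀ i ∈ σ, X i * u ∈ I)
    (hvcol : v ∈ Submodule.colon I ((Ideal.span {f | ∃ i ∈ σ, f = X i} : Ideal (MvPolynomial (Fin n) k)) : Set (MvPolynomial (Fin n) k))) :
    (koszulBd (fun i => Ideal.Quotient.mk I (X i))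
        (fun τ => if τ = insert ℓ σ
          then koszulSgn (insert ℓ σ) ℓ • Ideal.Quotient.mk I v else 0)
      = fun τ => if τ = σ then Ideal.Quotient.mk I u else 0)
    ∧ (∃ w : Finset (Fin n) → (MvPolynomial (Fin n) k ⧸ I),
        koszulBd (fun i => Ideal.Quotient.mk I (X i)) w
          = fun τ => if τ = σ then Ideal.Quotient.mk I u else 0) := by
  have key : (koszulBd (fun i => Ideal.Quotient.mk I (X i))
        (fun τ => if τ = insert ℓ σ
          then koszulSgn (insert ℓ σ) ℓ • Ideal.Quotient.mk I v else 0)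
      = fun τ => if τ = σ then Ideal.Quotient.mk I u else 0) := by
    funext σ'
    unfold koszulBd
    by_cases hσ' : σ' = σ
    · subst hσ'
      rw [if_pos rfl]
      rw [Finset.sum_eq_single ℓ]
      · simp only [if_pos rfl, if_true]
        have hsq : koszulSgn (insert ℓ σ') ℓ * koszulSgn (insert ℓ σ') ℓ = 1 := by
          unfold koszulSgn
          rw [← pow_add, ← two_mul, pow_mul]
          norm_num
        rw [mul_smul_comm, smul_smul, hsq, one_smul, hu, map_mul]
      · intro j hj hjl
        have hne : insert j σ' ≠ insert ℓ σ' := by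
          intro h
          have hjm : j ∈ insert ℓ σ' := h ▸ Finset.mem_insert_self j σ'
          rcases Finset.mem_insert.mp hjm with h1 | h2
          · exact hjl h1
          · exact (Finset.mem_compl.mp hj) h2
        simp only [if_neg hne, mul_zero, smul_zero]
      · intro h
        exact absurd (Finset.mem_compl.mpr hℓ) h
    · rw [if_neg hσ']
      apply Finset.sum_eq_zero
      intro j hj
      by_cases hins : insert j σ' = insert ℓ σ
      · have hj' : j ∉ σ' := Finset.mem_compl.mp hj
        have hjl : j ≠ ℓ := by
          intro h
          subst h
          apply hσ'
          have := congrArg (fun s => Finset.erase s j) hins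
          simpa [Finset.erase_insert hj', Finset.erase_insert hℓ] using this
        have hjσ : j ∈ σ := by
          have hjm : j ∈ insert ℓ σ := hins ▸ Finset.mem_insert_self j σ'
          rcases Finset.mem_insert.mp hjm with h1 | h2
          · exact absurd h1 hjl
          · exact h2
        have hz : Ideal.Quotient.mk I (X j) * Ideal.Quotient.mk I v = 0 := by
          rw [← map_mul, Ideal.Quotient.eq_zero_iff_mem]
          have := Submodule.mem_colon.mp hvcol (X j)
            (Ideal.subset_span ⟨j, hjσ, rfl⟩)
          simpa [smul_eq_mul, mul_comm] using this
        simp only [hins, if_pos rfl, if_true]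
        rw [mul_smul_comm, hz, smul_zero, smul_zero]
      · simp only [if_neg hins, mul_zero, smul_zero]
  exact ⟨key, _, key⟩
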